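/- For an integer Q ≥ 2 and ρ ≥ 0, let X be uniformly distributed on the Q-ary PPM alphabet {e_1, …, e_Q} ⊂ ℝ^Q (the standard basis vectors), let Z = (Z_1, …, Z_Q) be a standard Gaussian vector in ℝ^Q independent of X, and let Y = √ρ·X + Z. Define the estimator s(y) ∈ ℝ^Q by s(y)_i = exp(√ρ·y_i) / Σ_{k=1}^{Q} exp(√ρ·y_k). Then the mean-square error of s satisfies E[‖X − s(Y)‖²] = 1 − E[ (exp(2√ρ(√ρ + Z_1)) + (Q−1)·exp(2√ρ·Z_2)) / (exp(ρ + √ρ·Z_1) + Σ_{k=2}^{Q} exp(√ρ·Z_k))² ], where Z_1, …, Z_Q are i.i.d. standard Gaussian random variables. -/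

import Mathlib

open MeasureTheory ProbabilityTheory Real Filter
open scoped ProbabilityTheory ENNReal

/-- The conditional-mean (soft) estimator for `Q`-ary PPM on the AWGN channel at SNR `ρ`:
`s(y) i = exp(√ρ · y i) / ∑ k exp(√ρ · y k)`. -/
noncomputable def ppmEstimator (Q : ℕ) (ρ : ℝ) (y : Fin Q → ℝ) (i : Fin Q) : ℝ :=
  Real.exp (Real.sqrt ρ * y i) / ∑ k, Real.exp (Real.sqrt ρ * y k)

section PPMAux

/-- The `q`-th PPM signal (standard basis vector). -/
def ppmBas (Q : ℕ) (q : Fin Q) : Fin Q → ℝ := fun i => if i = q then 1 else 0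

/-- Denominator of the estimator evaluated at `√ρ • (ppmBas Q q) + z`. -/
noncomputable def ppmD (Q : ℕ) (ρ : ℝ) (q : Fin Q) (z : Fin Q → ℝ) : ℝ :=
  ∑ k, Real.exp (Real.sqrt ρ * (Real.sqrt ρ * ppmBas Q q k + z k))

/-- The estimator evaluated at `√ρ • (ppmBas Q q) + z`. -/
noncomputable def ppmS (Q : ℕ) (ρ : ℝ) (q : Fin Q) (z : Fin Q → ℝ) (i : Fin Q) : ℝ :=
  Real.exp (Real.sqrt ρ * (Real.sqrt ρ * ppmBas Q q i + z i)) / ppmD Q ρ q z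

variable {Q : ℕ} {ρ : ℝ}

local notation "γQ" => (Measure.pi fun _ : Fin Q => gaussianReal 0 1)

lemma ppmD_pos [NeZero Q] (q : Fin Q) (z : Fin Q → ℝ) : 0 < ppmD Q ρ q z :=
  Finset.sum_pos (fun _ _ => Real.exp_pos _) Finset.univ_nonempty

lemma exp_le_ppmD (q i : Fin Q) (z : Fin Q → ℝ) :
    Real.exp (Real.sqrt ρ * (Real.sqrt ρ * ppmBas Q q i + z i)) ≤ ppmD Q ρ q z :=
  Finset.single_le_sum
    (f := fun k => Real.exp (Real.sqrt ρ * (Real.sqrt ρ * ppmBas Q q k + z k)))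
    (fun k _ => (Real.exp_pos _).le) (Finset.mem_univ i)

lemma ppmS_nonneg (q : Fin Q) (z : Fin Q → ℝ) (i : Fin Q) : 0 ≤ ppmS Q ρ q z i :=
  div_nonneg (Real.exp_pos _).le (Finset.sum_nonneg fun _ _ => (Real.exp_pos _).le)

lemma ppmS_le_one [NeZero Q] (q : Fin Q) (z : Fin Q → ℝ) (i : Fin Q) : ppmS Q ρ q z i ≤ 1 :=
  div_le_one_of_le₀ (exp_le_ppmD q i z) (ppmD_pos q z).le

lemma sum_ppmS [NeZero Q] (q : Fin Q) (z : Fin Q → ℝ) : ∑ i, ppmS Q ρ q z i = 1 := by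
  unfold ppmS
  rw [← Finset.sum_div]
  exact div_self (ppmD_pos q z).ne'

lemma measurable_ppmD (q : Fin Q) : Measurable (ppmD Q ρ q) := by
  unfold ppmD; fun_prop

lemma measurable_ppmS (q i : Fin Q) : Measurable fun z => ppmS Q ρ q z i := by
  unfold ppmS ppmD; fun_prop

lemma ppmD_comp (σ : Equiv.Perm (Fin Q)) (q : Fin Q) (z : Fin Q → ℝ) :
    ppmD Q ρ q (fun k => z (σ k)) = ppmD Q ρ (σ q) z := by
  unfold ppmD
  rw [← Equiv.sum_comp σ fun j => Real.exp (Real.sqrt ρ * (Real.sqrt ρ * ppmBas Q (σ q) j + z j))]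
  refine Finset.sum_congr rfl fun k _ => ?_
  unfold ppmBas
  simp [Equiv.apply_eq_iff_eq]

lemma ppmS_comp (σ : Equiv.Perm (Fin Q)) (q : Fin Q) (z : Fin Q → ℝ) (i : Fin Q) :
    ppmS Q ρ q (fun k => z (σ k)) i = ppmS Q ρ (σ q) z (σ i) := by
  unfold ppmS
  rw [ppmD_comp]
  congr 3
  unfold ppmBas
  simp [Equiv.apply_eq_iff_eq]

lemma ppm_perm_int (σ : Equiv.Perm (Fin Q)) (f : (Fin Q → ℝ) → ℝ) :
    ∫ z, f (fun i => z (σ i)) ∂γQ = ∫ z, f z ∂γQ := by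
  have h := MeasureTheory.measurePreserving_piCongrLeft (fun _ : Fin Q => gaussianReal 0 1) σ.symm
  have he := (MeasurableEquiv.piCongrLeft (fun _ : Fin Q => ℝ) σ.symm).measurableEmbedding
  have key := h.integral_comp he f
  rw [← key]
  congr 1
  ext z
  congr 1
  ext i
  simp [MeasurableEquiv.coe_piCongrLeft, Equiv.piCongrLeft_apply, eq_rec_constant]

lemma ppm_gauss_tilt1 (a : ℝ) :
    (gaussianReal 0 1).withDensity (fun x => ENNReal.ofReal (Real.exp (a * x - a ^ 2 / 2)))
      = gaussianReal a 1 := by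
  rw [gaussianReal_of_var_ne_zero 0 one_ne_zero, gaussianReal_of_var_ne_zero a one_ne_zero,
    ← withDensity_mul _ (measurable_gaussianPDF _ _) (by fun_prop)]
  congr 1
  ext x
  rw [gaussianPDF_def, gaussianPDF_def, Pi.mul_apply,
    ← ENNReal.ofReal_mul (gaussianPDFReal_nonneg _ _ _)]
  congr 1
  simp only [gaussianPDFReal]
  rw [mul_assoc, ← Real.exp_add]
  congr 1
  push_cast
  ring

lemma ppm_lint_tilt1 (a : ℝ) (f : ℝ → ℝ≥0∞) (hf : Measurable f) :
    ∫⁻ x, ENNReal.ofReal (Real.exp (a * x - a ^ 2 / 2)) * f x ∂(gaussianReal 0 1)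
      = ∫⁻ x, f (x + a) ∂(gaussianReal 0 1) := by
  have h1 := lintegral_withDensity_eq_lintegral_mul (gaussianReal 0 1)
    (f := fun x => ENNReal.ofReal (Real.exp (a * x - a ^ 2 / 2))) (by fun_prop) hf
  simp only [Pi.mul_apply] at h1
  rw [← h1, ppm_gauss_tilt1]
  have h := gaussianReal_map_add_const (μ := 0) (v := 1) a
  rw [zero_add] at h
  rw [← h, lintegral_map hf (by fun_prop)]

lemma ppm_lint_tiltPi (i : Fin Q) (a : ℝ) (f : (Fin Q → ℝ) → ℝ≥0∞) (hf : Measurable f) :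
    ∫⁻ z, ENNReal.ofReal (Real.exp (a * z i - a ^ 2 / 2)) * f z ∂γQ
      = ∫⁻ z, f (fun j => z j + if j = i then a else 0) ∂γQ := by
  have hsh : Measurable fun (z : Fin Q → ℝ) => (fun j => z j + if j = i then a else 0) := by
    fun_prop
  rw [lintegral_eq_lmarginal_univ (fun _ => (0:ℝ)),
    lmarginal_erase' _ (by fun_prop) (Finset.mem_univ i),
    lintegral_eq_lmarginal_univ (fun _ => (0:ℝ)),
    lmarginal_erase' (fun z => f fun j => z j + if j = i then a else 0)
      (hf.comp hsh) (Finset.mem_univ i)]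
  congr 1
  ext x
  have h1 : ∀ xi : ℝ, (fun z => ENNReal.ofReal (Real.exp (a * z i - a ^ 2 / 2)) * f z)
      (Function.update x i xi)
      = ENNReal.ofReal (Real.exp (a * xi - a ^ 2 / 2)) * f (Function.update x i xi) := by
    intro xi; simp [Function.update_self]
  simp_rw [h1]
  rw [ppm_lint_tilt1 a (fun t => f (Function.update x i t)) (hf.comp (measurable_update x))]
  congr 1
  ext xi
  congr 1
  ext j
  rcases eq_or_ne j i with h | h
  · subst h; simp [Function.update_self]
  · simp [Function.update_of_ne h, h]

lemma ppm_int_eq_of_lint {α} [MeasurableSpace α] {μ : Measure α} {f g : α → ℝ}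
    (hf : Measurable f) (hg : Measurable g) (hf0 : ∀ x, 0 ≤ f x) (hg0 : ∀ x, 0 ≤ g x)
    (h : ∫⁻ x, ENNReal.ofReal (f x) ∂μ = ∫⁻ x, ENNReal.ofReal (g x) ∂μ) :
    ∫ x, f x ∂μ = ∫ x, g x ∂μ := by
  rw [integral_eq_lintegral_of_nonneg_ae (ae_of_all _ hf0) hf.aestronglyMeasurable,
    integral_eq_lintegral_of_nonneg_ae (ae_of_all _ hg0) hg.aestronglyMeasurable, h]

lemma ppm_integ_bdd {α} [MeasurableSpace α] {μ : Measure α} [IsFiniteMeasure μ] {f : α → ℝ}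
    (hm : Measurable f) (C : ℝ) (h0 : ∀ x, 0 ≤ f x) (h1 : ∀ x, f x ≤ C) : Integrable f μ :=
  (integrable_const C).mono' hm.aestronglyMeasurable
    (ae_of_all _ fun x => by rw [Real.norm_eq_abs, abs_of_nonneg (h0 x)]; exact h1 x)

lemma ppm_integ_S_mul [NeZero Q] (q q' i i' : Fin Q) :
    Integrable (fun z => ppmS Q ρ q z i * ppmS Q ρ q' z i') γQ :=
  ppm_integ_bdd ((measurable_ppmS q i).mul (measurable_ppmS q' i')) 1
    (fun z => mul_nonneg (ppmS_nonneg _ _ _) (ppmS_nonneg _ _ _))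
    (fun z => mul_le_one₀ (ppmS_le_one _ _ _) (ppmS_nonneg _ _ _) (ppmS_le_one _ _ _))

lemma ppm_integ_S_sq [NeZero Q] (q i : Fin Q) :
    Integrable (fun z => (ppmS Q ρ q z i) ^ 2) γQ := by
  simp_rw [pow_two]
  exact ppm_integ_S_mul q q i i

lemma ppm_integ_S [NeZero Q] (q i : Fin Q) : Integrable (fun z => ppmS Q ρ q z i) γQ :=
  ppm_integ_bdd (measurable_ppmS q i) 1 (ppmS_nonneg q · i) (ppmS_le_one q · i)

lemma ppm_sym_B (i0 q : Fin Q) :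
    ∫ z, (ppmS Q ρ i0 z q) ^ 2 ∂γQ = ∫ z, (ppmS Q ρ q z i0) ^ 2 ∂γQ := by
  have := ppm_perm_int (Equiv.swap i0 q) (fun z => (ppmS Q ρ q z i0) ^ 2)
  rw [← this]
  refine integral_congr_ae (ae_of_all _ fun z => ?_)
  show ppmS Q ρ i0 z q ^ 2 = ppmS Q ρ q (fun i => z (Equiv.swap i0 q i)) i0 ^ 2
  rw [ppmS_comp, Equiv.swap_apply_right, Equiv.swap_apply_left]

lemma ppm_sym_C (i0 i k : Fin Q) (hi : i ≠ i0) (hk : k ≠ i0) :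
    ∫ z, (ppmS Q ρ i0 z i) ^ 2 ∂γQ = ∫ z, (ppmS Q ρ i0 z k) ^ 2 ∂γQ := by
  have := ppm_perm_int (Equiv.swap i k) (fun z => (ppmS Q ρ i0 z k) ^ 2)
  rw [← this]
  refine integral_congr_ae (ae_of_all _ fun z => ?_)
  show ppmS Q ρ i0 z i ^ 2 = ppmS Q ρ i0 (fun j => z (Equiv.swap i k j)) k ^ 2
  rw [ppmS_comp, Equiv.swap_apply_of_ne_of_ne hi.symm hk.symm, Equiv.swap_apply_right]

lemma ppm_sym_D (q i0 : Fin Q) :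
    ∫ z, ∑ i, (ppmBas Q q i - ppmS Q ρ q z i) ^ 2 ∂γQ
      = ∫ z, ∑ i, (ppmBas Q i0 i - ppmS Q ρ i0 z i) ^ 2 ∂γQ := by
  have := ppm_perm_int (Equiv.swap q i0) (fun z => ∑ i, (ppmBas Q i0 i - ppmS Q ρ i0 z i) ^ 2)
  rw [← this]
  refine integral_congr_ae (ae_of_all _ fun z => ?_)
  show ∑ i, (ppmBas Q q i - ppmS Q ρ q z i) ^ 2
      = ∑ i, (ppmBas Q i0 i - ppmS Q ρ i0 (fun j => z (Equiv.swap q i0 j)) i) ^ 2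
  rw [← Equiv.sum_comp (Equiv.swap q i0)
    (fun i => (ppmBas Q i0 i - ppmS Q ρ i0 (fun j => z (Equiv.swap q i0 j)) i) ^ 2)]
  refine Finset.sum_congr rfl fun i _ => ?_
  rw [ppmS_comp, Equiv.swap_apply_self, Equiv.swap_apply_right]
  congr 2
  unfold ppmBas
  simp only [Equiv.swap_apply_eq_iff, Equiv.swap_apply_right]

lemma ppm_core_tilt [NeZero Q] (hρ : 0 ≤ ρ) {i0 k : Fin Q} (hk : k ≠ i0) :
    ∫ z, ppmS Q ρ i0 z i0 * ppmS Q ρ i0 z k ∂γQ = ∫ z, (ppmS Q ρ k z i0) ^ 2 ∂γQ := by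
  have hik : i0 ≠ k := hk.symm
  set h : (Fin Q → ℝ) → ℝ := fun z => (ppmS Q ρ i0 z i0) ^ 2 with hh
  have hhm : Measurable h := (measurable_ppmS i0 i0).pow_const 2
  set f₂ : (Fin Q → ℝ) → ℝ≥0∞ :=
    fun y => ENNReal.ofReal (h (fun j => y j + if j = k then Real.sqrt ρ else 0)) with hf₂
  have hf₂m : Measurable f₂ := by
    apply (ENNReal.measurable_ofReal.comp hhm).comp
    fun_prop
  set f₁ : (Fin Q → ℝ) → ℝ≥0∞ :=
    fun y => ENNReal.ofReal (Real.exp ((-Real.sqrt ρ) * y i0 - (-Real.sqrt ρ) ^ 2 / 2))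
      * ENNReal.ofReal (h y) with hf₁
  have hf₁m : Measurable f₁ := by
    apply Measurable.fun_mul
    · fun_prop
    · exact ENNReal.measurable_ofReal.comp hhm
  apply ppm_int_eq_of_lint
    ((measurable_ppmS i0 i0).mul (measurable_ppmS i0 k))
    ((measurable_ppmS k i0).pow_const 2)
    (fun z => mul_nonneg (ppmS_nonneg _ _ _) (ppmS_nonneg _ _ _))
    (fun z => sq_nonneg _)
  have p1 : ∀ z : Fin Q → ℝ, ENNReal.ofReal (ppmS Q ρ i0 z i0 * ppmS Q ρ i0 z k)
      = ENNReal.ofReal (Real.exp (Real.sqrt ρ * z k - Real.sqrt ρ ^ 2 / 2)) * f₁ z := by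
    intro z
    rw [hf₁]
    simp only
    rw [← ENNReal.ofReal_mul (Real.exp_nonneg _), ← ENNReal.ofReal_mul (Real.exp_nonneg _)]
    congr 1
    rw [hh]
    simp only
    unfold ppmS
    rw [div_mul_div_comm, div_pow, pow_two (ppmD Q ρ i0 z), mul_div_assoc', mul_div_assoc']
    congr 1
    simp only [pow_two, ← Real.exp_add, ← mul_assoc]
    congr 1
    simp only [ppmBas, if_pos rfl, if_neg hik, if_neg hk, ite_true, ite_false]
    ring
  have p2 : ∀ z : Fin Q → ℝ, f₁ (fun j => z j + if j = k then Real.sqrt ρ else 0)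
      = ENNReal.ofReal (Real.exp ((-Real.sqrt ρ) * z i0 - (-Real.sqrt ρ) ^ 2 / 2))
        * f₂ z := by
    intro z
    rw [hf₁, hf₂]
    simp only [if_neg hik]
    rw [add_zero]
  have p3 : ∀ z : Fin Q → ℝ,
      ENNReal.ofReal (h (fun j => (z j + if j = i0 then -Real.sqrt ρ else 0)
          + if j = k then Real.sqrt ρ else 0))
      = ENNReal.ofReal ((ppmS Q ρ k z i0) ^ 2) := by
    intro z
    congr 1
    rw [hh]
    simp only
    unfold ppmS
    have hDen : ppmD Q ρ i0 (fun j => (z j + if j = i0 then -Real.sqrt ρ else 0)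
        + if j = k then Real.sqrt ρ else 0) = ppmD Q ρ k z := by
      unfold ppmD
      refine Finset.sum_congr rfl fun j _ => ?_
      congr 1
      rcases eq_or_ne j i0 with hj | hj
      · subst hj
        simp only [ppmBas, if_pos rfl, if_neg hik, ite_true, ite_false]
        ring
      · rcases eq_or_ne j k with hj' | hj'
        · subst hj'
          simp only [ppmBas, if_pos rfl, if_neg hj, ite_true, ite_false]
          ring
        · simp only [ppmBas, if_neg hj, if_neg hj', ite_true, ite_false]
          ring
    rw [hDen]
    congr 2
    simp only [ppmBas, if_pos rfl, if_neg hik, ite_true, ite_false]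
    ring
  calc ∫⁻ z, ENNReal.ofReal (ppmS Q ρ i0 z i0 * ppmS Q ρ i0 z k) ∂γQ
      = ∫⁻ z, ENNReal.ofReal (Real.exp (Real.sqrt ρ * z k - Real.sqrt ρ ^ 2 / 2)) * f₁ z ∂γQ :=
        lintegral_congr p1
    _ = ∫⁻ z, f₁ (fun j => z j + if j = k then Real.sqrt ρ else 0) ∂γQ :=
        ppm_lint_tiltPi k (Real.sqrt ρ) f₁ hf₁m
    _ = ∫⁻ z, ENNReal.ofReal (Real.exp ((-Real.sqrt ρ) * z i0 - (-Real.sqrt ρ) ^ 2 / 2))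
          * f₂ z ∂γQ := lintegral_congr p2
    _ = ∫⁻ z, f₂ (fun j => z j + if j = i0 then -Real.sqrt ρ else 0) ∂γQ :=
        ppm_lint_tiltPi i0 (-Real.sqrt ρ) f₂ hf₂m
    _ = ∫⁻ z, ENNReal.ofReal ((ppmS Q ρ k z i0) ^ 2) ∂γQ := lintegral_congr p3

lemma ppm_core_A [NeZero Q] (hρ : 0 ≤ ρ) (i0 : Fin Q) :
    ∫ z, ppmS Q ρ i0 z i0 ∂γQ = ∑ q, ∫ z, (ppmS Q ρ q z i0) ^ 2 ∂γQ := by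
  have h1 : ∀ z : Fin Q → ℝ, ppmS Q ρ i0 z i0 = ∑ q, ppmS Q ρ i0 z i0 * ppmS Q ρ i0 z q := by
    intro z; rw [← Finset.mul_sum, sum_ppmS, mul_one]
  calc ∫ z, ppmS Q ρ i0 z i0 ∂γQ
      = ∫ z, ∑ q, ppmS Q ρ i0 z i0 * ppmS Q ρ i0 z q ∂γQ :=
        integral_congr_ae (ae_of_all _ h1)
    _ = ∑ q, ∫ z, ppmS Q ρ i0 z i0 * ppmS Q ρ i0 z q ∂γQ :=
        integral_finset_sum _ (fun q _ => ppm_integ_S_mul _ _ _ _)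
    _ = ∑ q, ∫ z, (ppmS Q ρ q z i0) ^ 2 ∂γQ := by
        refine Finset.sum_congr rfl fun q _ => ?_
        rcases eq_or_ne q i0 with hq | hq
        · subst hq
          simp_rw [← pow_two]
        · exact ppm_core_tilt hρ hq

lemma ppm_smul_prod {α β : Type*} [MeasurableSpace α] [MeasurableSpace β] (c : ℝ≥0∞)
    (μ : Measure α) (ν : Measure β) [SigmaFinite (c • μ)] [SFinite μ] [SigmaFinite ν] :
    (c • μ).prod ν = c • (μ.prod ν) :=
  (Measure.prod_eq (μ := c • μ) (ν := ν) (μν := c • μ.prod ν) fun s t hs ht => by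
    simp only [Measure.smul_apply, Measure.prod_prod, smul_eq_mul, mul_assoc])

end PPMAux

/-- The MMSE of `Q`-ary PPM on the AWGN channel at SNR `ρ`:
`E[‖X − s(Y)‖²] = 1 − E[(e^{2√ρ(√ρ+Z₁)} + (Q−1)e^{2√ρ Z₂}) / (e^{ρ+√ρ Z₁} + ∑_{k≥2} e^{√ρ Z_k})²]`. -/
theorem ppm_mmse_formula {Ω : Type*} [MeasureSpace Ω] [IsProbabilityMeasure (ℙ : Measure Ω)]
    (Q : ℕ) (hQ : 2 ≤ Q) (ρ : ℝ) (hρ : 0 ≤ ρ)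
    (X Z : Ω → Fin Q → ℝ) (hXmeas : Measurable X) (hZmeas : Measurable Z)
    (hXlaw : Measure.map X ℙ =
      ((Q : ℝ≥0∞))⁻¹ • ∑ q : Fin Q, Measure.dirac (fun i => if i = q then (1 : ℝ) else 0))
    (hZlaw : Measure.map Z ℙ = Measure.pi fun _ : Fin Q => gaussianReal 0 1)
    (hindep : IndepFun X Z ℙ)
    (Y : Ω → Fin Q → ℝ) (hY : ∀ ω i, Y ω i = Real.sqrt ρ * X ω i + Z ω i) :
    ∫ ω, ∑ i, (X ω i - ppmEstimator Q ρ (Y ω) i) ^ 2 ∂ℙ =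
      1 - ∫ ω,
        (Real.exp (2 * Real.sqrt ρ * (Real.sqrt ρ + Z ω ⟨0, by omega⟩))
            + ((Q : ℝ) - 1) * Real.exp (2 * Real.sqrt ρ * Z ω ⟨1, by omega⟩)) /
          (Real.exp (ρ + Real.sqrt ρ * Z ω ⟨0, by omega⟩)
            + ∑ k ∈ Finset.univ \ {(⟨0, by omega⟩ : Fin Q)},
                Real.exp (Real.sqrt ρ * Z ω k)) ^ 2 ∂ℙ := by
  haveI : NeZero Q := ⟨by omega⟩
  have hss : Real.sqrt ρ * Real.sqrt ρ = ρ := Real.mul_self_sqrt hρ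
  set γ := (Measure.pi fun _ : Fin Q => gaussianReal 0 1) with hγdef
  haveI hγprob : IsProbabilityMeasure γ := by rw [hγdef]; infer_instance
  set i0 : Fin Q := ⟨0, by omega⟩ with hi0def
  set i1 : Fin Q := ⟨1, by omega⟩ with hi1def
  have hi10 : i1 ≠ i0 := by simp [hi0def, hi1def, Fin.ext_iff]
  -- the RHS integrand as a function of the noise
  set G : (Fin Q → ℝ) → ℝ := fun z =>
    (Real.exp (2 * Real.sqrt ρ * (Real.sqrt ρ + z i0))
        + ((Q : ℝ) - 1) * Real.exp (2 * Real.sqrt ρ * z i1)) /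
      (Real.exp (ρ + Real.sqrt ρ * z i0)
        + ∑ k ∈ Finset.univ \ {i0}, Real.exp (Real.sqrt ρ * z k)) ^ 2 with hGdef
  have hGm : Measurable G := by
    rw [hGdef]; fun_prop
  -- pointwise identification of G with the sufficient-statistic form
  have hGpt : ∀ z : Fin Q → ℝ, G z
      = (ppmS Q ρ i0 z i0) ^ 2 + ((Q : ℝ) - 1) * (ppmS Q ρ i0 z i1) ^ 2 := by
    intro z
    rw [hGdef]
    simp only
    have hden : Real.exp (ρ + Real.sqrt ρ * z i0)
        + ∑ k ∈ Finset.univ \ {i0}, Real.exp (Real.sqrt ρ * z k) = ppmD Q ρ i0 z := by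
      unfold ppmD
      have e1 : Real.exp (ρ + Real.sqrt ρ * z i0)
          = Real.exp (Real.sqrt ρ * (Real.sqrt ρ * ppmBas Q i0 i0 + z i0)) := by
        simp only [ppmBas, if_pos rfl, ite_true]
        rw [mul_one, mul_add, hss]
      have e2 : ∑ k ∈ Finset.univ \ {i0}, Real.exp (Real.sqrt ρ * z k)
          = ∑ k ∈ Finset.univ \ {i0},
              Real.exp (Real.sqrt ρ * (Real.sqrt ρ * ppmBas Q i0 k + z k)) := by
        refine Finset.sum_congr rfl fun k hk => ?_
        rw [Finset.mem_sdiff, Finset.mem_singleton] at hk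
        simp only [ppmBas, if_neg hk.2, ite_false]
        rw [mul_zero, zero_add]
      rw [e1, e2, add_comm]
      exact (Finset.sum_eq_sum_sdiff_singleton_add (Finset.mem_univ i0) _).symm
    rw [hden]
    unfold ppmS
    rw [div_pow, div_pow, ← mul_div_assoc, ← add_div]
    congr 2
    · simp only [pow_two, ← Real.exp_add, ppmBas, if_pos rfl, ite_true]
      congr 1
      ring
    · simp only [pow_two, ← Real.exp_add, ppmBas, if_neg hi10, ite_false]
      congr 1
      ring
  -- transport of the RHS integral to the Gaussian measure
  have hRHS0 : ∫ ω, G (Z ω) ∂ℙ = ∫ z, G z ∂γ := by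
    rw [← hZlaw]
    exact (integral_map hZmeas.aemeasurable hGm.aestronglyMeasurable).symm
  -- T = sum of squares integral
  have hGint : ∫ z, G z ∂γ = ∫ z, ∑ i, (ppmS Q ρ i0 z i) ^ 2 ∂γ := by
    have h2 : ∫ z, G z ∂γ = ∫ z, (ppmS Q ρ i0 z i0) ^ 2 ∂γ
        + ((Q : ℝ) - 1) * ∫ z, (ppmS Q ρ i0 z i1) ^ 2 ∂γ := by
      rw [← MeasureTheory.integral_const_mul, ← integral_add (ppm_integ_S_sq i0 i0)
        ((ppm_integ_S_sq i0 i1).const_mul _)]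
      exact integral_congr_ae (ae_of_all _ hGpt)
    have h3 : ∫ z, ∑ i, (ppmS Q ρ i0 z i) ^ 2 ∂γ
        = ∫ z, (ppmS Q ρ i0 z i0) ^ 2 ∂γ
          + ((Q : ℝ) - 1) * ∫ z, (ppmS Q ρ i0 z i1) ^ 2 ∂γ := by
      rw [integral_finset_sum _ (fun i _ => ppm_integ_S_sq i0 i),
        Finset.sum_eq_sum_sdiff_singleton_add (Finset.mem_univ i0)
          (fun i => ∫ z, (ppmS Q ρ i0 z i) ^ 2 ∂γ)]
      have h4 : ∑ i ∈ Finset.univ \ {i0}, ∫ z, (ppmS Q ρ i0 z i) ^ 2 ∂γ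
          = ∑ _i ∈ Finset.univ \ {i0}, ∫ z, (ppmS Q ρ i0 z i1) ^ 2 ∂γ :=
        Finset.sum_congr rfl (fun i hi => by
          rw [Finset.mem_sdiff, Finset.mem_singleton] at hi
          exact ppm_sym_C i0 i i1 hi.2 hi10)
      rw [h4, Finset.sum_const, Finset.card_sdiff_of_subset (Finset.subset_univ _), Finset.card_univ,
        Fintype.card_fin, Finset.card_singleton, nsmul_eq_mul, Nat.cast_sub (by omega),
        Nat.cast_one, add_comm]
    rw [h2, h3]
  -- LHS : reduce to the Gaussian measure
  set Φ : (Fin Q → ℝ) × (Fin Q → ℝ) → ℝ := fun p =>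
    ∑ i, (p.1 i - ppmEstimator Q ρ (fun j => Real.sqrt ρ * p.1 j + p.2 j) i) ^ 2 with hΦdef
  have hΦm : Measurable Φ := by
    rw [hΦdef]; unfold ppmEstimator; fun_prop
  have hpt : ∀ ω, ∑ i, (X ω i - ppmEstimator Q ρ (Y ω) i) ^ 2 = Φ (X ω, Z ω) := by
    intro ω
    rw [hΦdef]
    simp only
    have : (fun j => Real.sqrt ρ * X ω j + Z ω j) = Y ω := funext fun i => (hY ω i).symm
    rw [this]
  have hFq : ∀ q : Fin Q, (fun z => Φ (ppmBas Q q, z))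
      = fun z => ∑ i, (ppmBas Q q i - ppmS Q ρ q z i) ^ 2 := by
    intro q
    funext z
    rw [hΦdef]
    rfl
  have hFint : ∀ q : Fin Q,
      Integrable (fun z => ∑ i, (ppmBas Q q i - ppmS Q ρ q z i) ^ 2) γ :=
    fun q => integrable_finset_sum _ (fun i _ => by
      refine ppm_integ_bdd (((measurable_const.sub (measurable_ppmS q i)).pow_const 2)) 1
        (fun z => sq_nonneg _) (fun z => ?_)
      have h0 := ppmS_nonneg (ρ := ρ) q z i
      have h1 := ppmS_le_one (ρ := ρ) q z i
      have hb0 : (0:ℝ) ≤ ppmBas Q q i := by unfold ppmBas; positivity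
      have hb1 : ppmBas Q q i ≤ 1 := by unfold ppmBas; split <;> norm_num
      nlinarith [sq_nonneg (ppmBas Q q i - ppmS Q ρ q z i)])
  -- the product-measure decomposition
  have hpair : Measure.map (fun ω => (X ω, Z ω)) ℙ = (Measure.map X ℙ).prod (Measure.map Z ℙ) :=
    (indepFun_iff_map_prod_eq_prod_map_map hXmeas.aemeasurable hZmeas.aemeasurable).mp hindep
  haveI hsf : SFinite (∑ q : Fin Q, Measure.dirac (ppmBas Q q)) := by
    rw [← Measure.sum_fintype]; infer_instance
  haveI hprb : IsProbabilityMeasure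
      ((Q : ℝ≥0∞)⁻¹ • ∑ q : Fin Q, Measure.dirac (ppmBas Q q)) := by
    have := Measure.isProbabilityMeasure_map (μ := ℙ) hXmeas.aemeasurable
    rwa [hXlaw] at this
  have hXlaw' : Measure.map X ℙ = (Q : ℝ≥0∞)⁻¹ • ∑ q : Fin Q, Measure.dirac (ppmBas Q q) :=
    hXlaw
  have hLHS : ∫ ω, ∑ i, (X ω i - ppmEstimator Q ρ (Y ω) i) ^ 2 ∂ℙ
      = (Q : ℝ)⁻¹ * ∑ q, ∫ z, ∑ i, (ppmBas Q q i - ppmS Q ρ q z i) ^ 2 ∂γ := by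
    calc ∫ ω, ∑ i, (X ω i - ppmEstimator Q ρ (Y ω) i) ^ 2 ∂ℙ
        = ∫ ω, Φ (X ω, Z ω) ∂ℙ := integral_congr_ae (ae_of_all _ hpt)
      _ = ∫ p, Φ p ∂(Measure.map (fun ω => (X ω, Z ω)) ℙ) :=
          (integral_map (hXmeas.prodMk hZmeas).aemeasurable hΦm.aestronglyMeasurable).symm
      _ = ∫ p, Φ p ∂(((Q : ℝ≥0∞)⁻¹ • ∑ q : Fin Q, Measure.dirac (ppmBas Q q)).prod γ) := by
          rw [hpair, hXlaw', hZlaw]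
      _ = (Q : ℝ)⁻¹ * ∑ q, ∫ z, ∑ i, (ppmBas Q q i - ppmS Q ρ q z i) ^ 2 ∂γ := by
          rw [ppm_smul_prod, ← Measure.sum_fintype, Measure.prod_sum_left,
            Measure.sum_fintype, integral_smul_measure]
          simp_rw [Measure.dirac_prod]
          rw [integral_finset_sum_measure (fun q _ => ?_)]
          · rw [ENNReal.toReal_inv, ENNReal.toReal_natCast, smul_eq_mul]
            congr 1
            refine Finset.sum_congr rfl fun q _ => ?_
            rw [integral_map measurable_prodMk_left.aemeasurable hΦm.aestronglyMeasurable]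
            exact integral_congr_ae (ae_of_all _ fun z => congrFun (hFq q) z)
          · refine (integrable_map_measure hΦm.aestronglyMeasurable
              measurable_prodMk_left.aemeasurable).mpr ?_
            have : (Φ ∘ Prod.mk (ppmBas Q q)) = fun z => ∑ i, (ppmBas Q q i - ppmS Q ρ q z i) ^ 2 :=
              hFq q
            rw [this]
            exact hFint q
  -- symmetrize the LHS
  have hLHS2 : ∫ ω, ∑ i, (X ω i - ppmEstimator Q ρ (Y ω) i) ^ 2 ∂ℙ
      = ∫ z, ∑ i, (ppmBas Q i0 i - ppmS Q ρ i0 z i) ^ 2 ∂γ := by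
    rw [hLHS, Finset.sum_congr rfl (fun q _ => ppm_sym_D q i0), Finset.sum_const,
      Finset.card_univ, Fintype.card_fin, nsmul_eq_mul, ← mul_assoc,
      inv_mul_cancel₀ (Nat.cast_ne_zero.mpr (by omega : Q ≠ 0)), one_mul]
  -- expand the quadratic
  have hFpt : ∀ z : Fin Q → ℝ, ∑ i, (ppmBas Q i0 i - ppmS Q ρ i0 z i) ^ 2
      = 1 - 2 * ppmS Q ρ i0 z i0 + ∑ i, (ppmS Q ρ i0 z i) ^ 2 := by
    intro z
    have hterm : ∀ i : Fin Q, (ppmBas Q i0 i - ppmS Q ρ i0 z i) ^ 2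
        = ((if i = i0 then (1:ℝ) else 0)
          - 2 * (if i = i0 then ppmS Q ρ i0 z i else 0)) + (ppmS Q ρ i0 z i) ^ 2 := by
      intro i
      unfold ppmBas
      rcases eq_or_ne i i0 with hi | hi
      · simp only [if_pos hi, ite_true]; ring
      · simp only [if_neg hi, ite_false]; ring
    rw [Finset.sum_congr rfl (fun i _ => hterm i), Finset.sum_add_distrib,
      Finset.sum_sub_distrib, Finset.sum_ite_eq' Finset.univ i0 (fun _ => (1:ℝ)),
      ← Finset.mul_sum, Finset.sum_ite_eq' Finset.univ i0 (fun i => ppmS Q ρ i0 z i)]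
    simp [Finset.mem_univ]
  have hFint2 : ∫ z, ∑ i, (ppmBas Q i0 i - ppmS Q ρ i0 z i) ^ 2 ∂γ
      = 1 - 2 * ∫ z, ppmS Q ρ i0 z i0 ∂γ + ∫ z, ∑ i, (ppmS Q ρ i0 z i) ^ 2 ∂γ := by
    rw [integral_congr_ae (ae_of_all _ hFpt),
      integral_add (f := fun z => 1 - 2 * ppmS Q ρ i0 z i0)
        (g := fun z => ∑ i, (ppmS Q ρ i0 z i) ^ 2)
        ((integrable_const 1).sub ((ppm_integ_S i0 i0).const_mul 2))
        (integrable_finset_sum _ (fun i _ => ppm_integ_S_sq i0 i)),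
      integral_sub (f := fun _ => (1:ℝ)) (g := fun z => 2 * ppmS Q ρ i0 z i0)
        (integrable_const 1) ((ppm_integ_S i0 i0).const_mul 2),
      MeasureTheory.integral_const_mul, integral_const]
    simp [measure_univ]
    rfl
  -- the key MMSE identity
  have hST : ∫ z, ppmS Q ρ i0 z i0 ∂γ = ∫ z, ∑ i, (ppmS Q ρ i0 z i) ^ 2 ∂γ := by
    rw [ppm_core_A hρ i0, Finset.sum_congr rfl (fun q _ => (ppm_sym_B i0 q).symm),
      ← integral_finset_sum _ (fun q _ => ppm_integ_S_sq i0 q)]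
  -- conclude
  have hgoalR : ∫ ω,
      (Real.exp (2 * Real.sqrt ρ * (Real.sqrt ρ + Z ω ⟨0, by omega⟩))
          + ((Q : ℝ) - 1) * Real.exp (2 * Real.sqrt ρ * Z ω ⟨1, by omega⟩)) /
        (Real.exp (ρ + Real.sqrt ρ * Z ω ⟨0, by omega⟩)
          + ∑ k ∈ Finset.univ \ {(⟨0, by omega⟩ : Fin Q)},
              Real.exp (Real.sqrt ρ * Z ω k)) ^ 2 ∂ℙ
      = ∫ ω, G (Z ω) ∂ℙ := rfl
  rw [hLHS2, hFint2, hgoalR, hRHS0, hGint, ← hST]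
  ring
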